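/- Let σ² > 0 and c > 0, set x⁻ = σ²(1 − √c)² and x⁺ = σ²(1 + √c)², let m be the Marcenko–Pastur Stieltjes transform with parameters (σ², c), and define w(x) = x(1 + σ²c·m(x)) and φ(v) = v(1 − σ²c/(σ² − v)) for v ≠ σ². Then for every real x with x ∉ [x⁻, x⁺] and x ≠ 0: w(x) is real, w(x) ≠ σ², φ(w(x)) = x, the derivative φ′(w(x)) = 1 − σ⁴c/(σ² − w(x))² is strictly positive, and w(x) is the unique real number v ≠ σ² satisfying both φ(v) = x and φ′(v) > 0. -/

import Mathlib

/-- The Marcenko–Pastur Stieltjes transform with parameters `(σ² = s, c)`. -/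
noncomputable def mpStieltjes (s c : ℝ) (z : ℂ) : ℂ :=
  (∫ l in (s * (1 - Real.sqrt c) ^ 2)..(s * (1 + Real.sqrt c) ^ 2),
      (↑(Real.sqrt ((l - s * (1 - Real.sqrt c) ^ 2) * (s * (1 + Real.sqrt c) ^ 2 - l)) /
          (2 * Real.pi * s * c * l)) : ℂ) * (1 / ((l : ℂ) - z)))
    - (↑(max (1 - 1 / c) 0) : ℂ) / z

/-- `w(z) = z(1 + σ²c·m(z))`. -/
noncomputable def mpW (s c : ℝ) (z : ℂ) : ℂ :=
  z * (1 + (s : ℂ) * (c : ℂ) * mpStieltjes s c z)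


open Real MeasureTheory intervalIntegral Set

namespace MPproofAux

noncomputable def Sf (a b l : ℝ) : ℝ := Real.sqrt ((l - a) * (b - l))

lemma Sf_cont (a b : ℝ) : Continuous (fun l => Sf a b l) := by
  unfold Sf; fun_prop

lemma integrable_core {a b t : ℝ} (hab : a < b) (ht : t ≤ a ∨ b < t) :
    IntervalIntegrable (fun l => Sf a b l / (l - t)) volume a b := by
  rcases ht with ht | ht
  · have hmaj : IntervalIntegrable (fun l : ℝ => Real.sqrt (b - a) * (l - a) ^ (-(1/2) : ℝ))
        volume a b := by
      have h0 : IntervalIntegrable (fun l : ℝ => l ^ (-(1/2) : ℝ)) volume 0 (b - a) :=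
        intervalIntegral.intervalIntegrable_rpow' (by norm_num)
      have h1 := (h0.comp_sub_right a).const_mul (Real.sqrt (b - a))
      simpa using h1
    apply hmaj.mono_fun
    · exact (((Sf_cont a b).measurable).div
        ((continuous_id.sub continuous_const).measurable)).aestronglyMeasurable
    · rw [Set.uIoc_of_le hab.le]
      refine (ae_restrict_iff' measurableSet_Ioc).mpr (ae_of_all _ ?_)
      intro l hl
      have hla : 0 < l - a := by linarith [hl.1]
      have hlt : 0 < l - t := by linarith [hl.1]
      have hbl : 0 ≤ b - l := by linarith [hl.2]
      have hS : Sf a b l ≤ Real.sqrt (b - a) * Real.sqrt (l - a) := by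
        rw [← Real.sqrt_mul (by linarith)]
        apply Real.sqrt_le_sqrt
        nlinarith
      have hfpos : 0 ≤ Sf a b l / (l - t) := by
        apply div_nonneg (Real.sqrt_nonneg _) hlt.le
      have hgpos : (0:ℝ) ≤ Real.sqrt (b - a) * (l - a) ^ (-(1/2) : ℝ) := by
        positivity
      simp only []
      rw [Real.norm_of_nonneg hfpos, Real.norm_of_nonneg hgpos]
      have h1 : Sf a b l / (l - t) ≤ Sf a b l / (l - a) := by
        apply div_le_div_of_nonneg_left (Real.sqrt_nonneg _) hla
        · linarith
      refine h1.trans ?_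
      have h2 : Sf a b l / (l - a) ≤ Real.sqrt (b - a) * Real.sqrt (l - a) / (l - a) := by
        gcongr
      refine h2.trans_eq ?_
      rw [Real.rpow_neg hla.le, ← Real.sqrt_eq_rpow]
      rw [mul_div_assoc]
      congr 1
      rw [inv_eq_one_div, div_eq_div_iff hla.ne' (Real.sqrt_pos.mpr hla).ne',
        one_mul, Real.mul_self_sqrt hla.le]
  · apply ContinuousOn.intervalIntegrable
    apply ContinuousOn.div ((Sf_cont a b).continuousOn) (by fun_prop)
    intro l hl
    rw [Set.uIcc_of_le hab.le] at hl
    have := hl.2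
    intro h; have : l = t := by linarith
    linarith [hl.2, ht]

lemma deriv_F {a b t η : ℝ} (hab : a < b) (hη : (t < a ∧ η = 1) ∨ (b < t ∧ η = -1))
    {l : ℝ} (hl : l ∈ Set.Ioo a b) :
    HasDerivAt (fun y => Sf a b y + ((a+b)/2 - t) * Real.arcsin ((2*y - (a+b))/(b-a))
      + η * Real.sqrt ((t-a)*(t-b)) *
          Real.arcsin ((2*a*b + 2*t*y - (a+b)*(y+t))/((b-a)*(y-t))))
      (Sf a b l / (l - t)) l := by
  obtain ⟨hal, hlb⟩ := hl
  have hba : (0:ℝ) < b - a := by linarith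
  have hu : (0:ℝ) < (l - a) * (b - l) := by nlinarith
  set SS := Real.sqrt ((l - a) * (b - l)) with hSSdef
  have hSS : 0 < SS := Real.sqrt_pos.mpr hu
  have hSS2 : SS ^ 2 = (l - a) * (b - l) := Real.sq_sqrt hu.le
  have hq : (0:ℝ) < (t - a) * (t - b) := by
    rcases hη with ⟨h, _⟩ | ⟨h, _⟩ <;> nlinarith
  set sq := Real.sqrt ((t - a) * (t - b)) with hsqdef
  have hsq : 0 < sq := Real.sqrt_pos.mpr hq
  have hq2 : sq ^ 2 = (t - a) * (t - b) := Real.sq_sqrt hq.le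
  have hlt : l - t ≠ 0 := by
    rcases hη with ⟨h, _⟩ | ⟨h, _⟩ <;> intro h0 <;> nlinarith
  -- Term 1
  have h1a : HasDerivAt (fun y : ℝ => (y - a) * (b - y)) (a + b - 2*l) l := by
    have := ((hasDerivAt_id l).sub_const a).mul ((hasDerivAt_const l b).sub (hasDerivAt_id l))
    refine this.congr_deriv ?_
    simp only [Pi.sub_apply, id_eq]
    ring
  have h1 : HasDerivAt (fun y => Sf a b y) ((a + b - 2*l) / (2*SS)) l := by
    have := (Real.hasDerivAt_sqrt hu.ne').comp l h1a
    refine this.congr_deriv ?_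
    rw [← hSSdef]
    ring
  -- Term 2
  have h2a : HasDerivAt (fun y : ℝ => (2*y - (a+b))/(b-a)) (2/(b-a)) l := by
    have := (((hasDerivAt_id l).const_mul 2).sub_const (a+b)).div_const (b-a)
    refine this.congr_deriv ?_
    norm_num
  have h2lt : (2*l - (a+b))/(b-a) < 1 := (div_lt_one hba).mpr (by linarith)
  have h2gt : -1 < (2*l - (a+b))/(b-a) := (lt_div_iff₀ hba).mpr (by linarith)
  have hsq2 : Real.sqrt (1 - ((2*l - (a+b))/(b-a))^2) = 2*SS/(b-a) := by
    rw [show 1 - ((2*l - (a+b))/(b-a))^2 = (2*SS/(b-a))^2 by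
      rw [div_pow, div_pow, mul_pow, hSS2]; field_simp; ring]
    exact Real.sqrt_sq (by positivity)
  have h2 : HasDerivAt (fun y : ℝ => ((a+b)/2 - t) * Real.arcsin ((2*y - (a+b))/(b-a)))
      (((a+b)/2 - t)/SS) l := by
    have := ((Real.hasDerivAt_arcsin (ne_of_gt h2gt) (ne_of_lt h2lt)).comp l h2a).const_mul
      ((a+b)/2 - t)
    simp only [Function.comp] at this
    refine this.congr_deriv ?_
    rw [hsq2]
    field_simp
  -- Term 3
  have hM : (b-a)*(l-t) ≠ 0 := mul_ne_zero hba.ne' hlt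
  have h3a : HasDerivAt (fun y : ℝ => 2*a*b + 2*t*y - (a+b)*(y+t)) (2*t - (a+b)) l := by
    have := ((hasDerivAt_const l (2*a*b)).add ((hasDerivAt_id l).const_mul (2*t))).sub
      (((hasDerivAt_id l).add_const t).const_mul (a+b))
    refine this.congr_deriv ?_
    ring
  have h3b : HasDerivAt (fun y : ℝ => (b-a)*(y-t)) (b-a) l := by
    have := ((hasDerivAt_id l).sub_const t).const_mul (b-a)
    refine this.congr_deriv ?_
    ring
  have hg : HasDerivAt (fun y : ℝ => (2*a*b + 2*t*y - (a+b)*(y+t))/((b-a)*(y-t)))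
      (-2*((t-a)*(t-b))/((b-a)*(l-t)^2)) l := by
    have := h3a.div h3b hM
    refine this.congr_deriv ?_
    field_simp
    ring
  have hMN : (b-a)*(l-t) - (2*a*b + 2*t*l - (a+b)*(l+t)) = 2*(b-t)*(l-a) := by ring
  have hMN' : (2*a*b + 2*t*l - (a+b)*(l+t)) + (b-a)*(l-t) = 2*(b-l)*(a-t) := by ring
  have hne1 : (2*a*b + 2*t*l - (a+b)*(l+t))/((b-a)*(l-t)) ≠ 1 := by
    rw [Ne, div_eq_one_iff_eq hM]
    intro h
    rcases hη with ⟨hc, _⟩ | ⟨hc, _⟩ <;> nlinarith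
  have hne1' : (2*a*b + 2*t*l - (a+b)*(l+t))/((b-a)*(l-t)) ≠ -1 := by
    rw [Ne, div_eq_iff hM]
    intro h
    rcases hη with ⟨hc, _⟩ | ⟨hc, _⟩ <;> nlinarith
  -- sqrt of 1 - g^2, by cases
  have harc := (Real.hasDerivAt_arcsin hne1' hne1).comp l hg
  have h3 := harc.const_mul (η * sq)
  have h3' : HasDerivAt (fun y : ℝ => η * sq *
      Real.arcsin ((2*a*b + 2*t*y - (a+b)*(y+t))/((b-a)*(y-t))))
      (-((t-a)*(t-b))/((l-t)*SS)) l := by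
    refine h3.congr_deriv ?_
    rcases hη with ⟨hc, hηv⟩ | ⟨hc, hηv⟩
    · have hd : 0 < l - t := by linarith
      have hgs : Real.sqrt (1 - ((2*a*b + 2*t*l - (a+b)*(l+t))/((b-a)*(l-t)))^2)
          = 2*sq*SS/((b-a)*(l-t)) := by
        have h4 : (2*sq*SS/((b-a)*(l-t)))^2
            = 4*((t-a)*(t-b))*((l-a)*(b-l))/(((b-a)*(l-t))^2) := by
          rw [div_pow, show (2*sq*SS)^2 = 4*sq^2*SS^2 by ring, hq2, hSS2]
        rw [show 1 - ((2*a*b + 2*t*l - (a+b)*(l+t))/((b-a)*(l-t)))^2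
            = (2*sq*SS/((b-a)*(l-t)))^2 by rw [h4]; field_simp; ring]
        exact Real.sqrt_sq (by positivity)
      rw [hgs, hηv]
      field_simp
    · have hd : 0 < t - l := by linarith
      have hgs : Real.sqrt (1 - ((2*a*b + 2*t*l - (a+b)*(l+t))/((b-a)*(l-t)))^2)
          = 2*sq*SS/((b-a)*(t-l)) := by
        have h4 : (2*sq*SS/((b-a)*(t-l)))^2
            = 4*((t-a)*(t-b))*((l-a)*(b-l))/(((b-a)*(l-t))^2) := by
          rw [div_pow, show (2*sq*SS)^2 = 4*sq^2*SS^2 by ring, hq2, hSS2,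
            show ((b-a)*(t-l))^2 = ((b-a)*(l-t))^2 by ring]
        rw [show 1 - ((2*a*b + 2*t*l - (a+b)*(l+t))/((b-a)*(l-t)))^2
            = (2*sq*SS/((b-a)*(t-l)))^2 by rw [h4]; field_simp; ring]
        exact Real.sqrt_sq (by positivity)
      rw [hgs, hηv]
      have : t - l ≠ 0 := hd.ne'
      field_simp
      ring
  -- Sum
  have := (h1.add h2).add h3'
  refine this.congr_deriv ?_
  symm
  rw [show Sf a b l = SS from rfl]
  rw [div_add_div _ _ (by positivity : (2*SS:ℝ) ≠ 0) hSS.ne',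
    div_add_div _ _ (by positivity : (2*SS*SS:ℝ) ≠ 0) (mul_ne_zero hlt hSS.ne'),
    div_eq_div_iff hlt (by exact mul_ne_zero (by positivity) (mul_ne_zero hlt hSS.ne'))]
  linear_combination (2*SS^2*(l-t)) * hSS2

lemma F_cont {a b t η : ℝ} (hab : a < b) (ht : (t < a ∨ b < t) ∨ t = a) :
    ContinuousOn (fun y => Sf a b y + ((a+b)/2 - t) * Real.arcsin ((2*y - (a+b))/(b-a))
      + η * Real.sqrt ((t-a)*(t-b)) *
          Real.arcsin ((2*a*b + 2*t*y - (a+b)*(y+t))/((b-a)*(y-t)))) (Set.Icc a b) := by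
  have hba : (0:ℝ) < b - a := by linarith
  apply ContinuousOn.add
  · apply ContinuousOn.add
    · exact (Sf_cont a b).continuousOn
    · apply Continuous.continuousOn
      apply Continuous.mul continuous_const
      exact Real.continuous_arcsin.comp
        ((continuous_const.mul continuous_id |>.sub continuous_const).div_const _)
  · rcases ht with ht | rfl
    · have hlt : ∀ l ∈ Set.Icc a b, l - t ≠ 0 := by
        intro l hl
        rcases ht with h | h
        · have := hl.1; intro h0; nlinarith
        · have := hl.2; intro h0; nlinarith
      exact continuousOn_const.mul (Real.continuous_arcsin.comp_continuousOn <|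
        ContinuousOn.div (by fun_prop) (by fun_prop)
          fun l hl => mul_ne_zero hba.ne' (hlt l hl))
    · have : (fun y : ℝ => η * Real.sqrt ((t-t)*(t-b)) *
          Real.arcsin ((2*t*b + 2*t*y - (t+b)*(y+t))/((b-t)*(y-t)))) = fun _ => 0 := by
        funext y; simp
      rw [this]
      exact continuousOn_const

lemma endpointA {a b t η : ℝ} (hab : a < b) (ht : t ≠ a) :
    Sf a b a + ((a+b)/2 - t) * Real.arcsin ((2*a - (a+b))/(b-a))
      + η * Real.sqrt ((t-a)*(t-b)) *
          Real.arcsin ((2*a*b + 2*t*a - (a+b)*(a+t))/((b-a)*(a-t)))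
    = -(((a+b)/2 - t) * (π/2)) + η * Real.sqrt ((t-a)*(t-b)) * (π/2) := by
  have hba : (0:ℝ) < b - a := by linarith
  have h1 : (2*a - (a+b))/(b-a) = -1 := by
    rw [div_eq_iff hba.ne']; ring
  have h2 : (2*a*b + 2*t*a - (a+b)*(a+t))/((b-a)*(a-t)) = 1 := by
    rw [show 2*a*b + 2*t*a - (a+b)*(a+t) = (b-a)*(a-t) by ring]
    exact div_self (mul_ne_zero hba.ne' (sub_ne_zero.mpr (Ne.symm ht)))
  rw [h1, h2, Real.arcsin_neg_one, Real.arcsin_one, Sf]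
  simp

lemma endpointB {a b t η : ℝ} (hab : a < b) (ht : t ≠ b) :
    Sf a b b + ((a+b)/2 - t) * Real.arcsin ((2*b - (a+b))/(b-a))
      + η * Real.sqrt ((t-a)*(t-b)) *
          Real.arcsin ((2*a*b + 2*t*b - (a+b)*(b+t))/((b-a)*(b-t)))
    = ((a+b)/2 - t) * (π/2) - η * Real.sqrt ((t-a)*(t-b)) * (π/2) := by
  have hba : (0:ℝ) < b - a := by linarith
  have h1 : (2*b - (a+b))/(b-a) = 1 := by
    rw [div_eq_one_iff_eq hba.ne']; ring
  have h2 : (2*a*b + 2*t*b - (a+b)*(b+t))/((b-a)*(b-t)) = -1 := by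
    rw [div_eq_iff (mul_ne_zero hba.ne' (sub_ne_zero.mpr (Ne.symm ht)))]; ring
  rw [h1, h2, Real.arcsin_neg_one, Real.arcsin_one, Sf]
  simp
  ring

lemma K_le {a b t : ℝ} (hab : a < b) (ht : t ≤ a) :
    ∫ l in a..b, Sf a b l / (l - t)
      = π * ((a+b)/2 - t - Real.sqrt ((t-a)*(t-b))) := by
  rcases eq_or_lt_of_le ht with rfl | hta
  · -- t = a : sqrt term is 0
    have hderiv : ∀ l ∈ Set.Ioo t b, HasDerivWithinAt
        (fun y => Sf t b y + ((t+b)/2 - t) * Real.arcsin ((2*y - (t+b))/(b-t))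
          + 1 * Real.sqrt ((t-t)*(t-b)) *
            Real.arcsin ((2*t*b + 2*t*y - (t+b)*(y+t))/((b-t)*(y-t))))
        (Sf t b l / (l - t)) (Set.Ioi l) l := by
      intro l hl
      apply HasDerivAt.hasDerivWithinAt
      obtain ⟨hal, hlb⟩ := hl
      have hba : (0:ℝ) < b - t := by linarith
      have hu : (0:ℝ) < (l - t) * (b - l) := by nlinarith
      have hSS : 0 < Real.sqrt ((l - t) * (b - l)) := Real.sqrt_pos.mpr hu
      have hSS2 : Real.sqrt ((l - t) * (b - l)) ^ 2 = (l - t) * (b - l) := Real.sq_sqrt hu.le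
      have h1a : HasDerivAt (fun y : ℝ => (y - t) * (b - y)) (t + b - 2*l) l := by
        have := ((hasDerivAt_id l).sub_const t).mul ((hasDerivAt_const l b).sub (hasDerivAt_id l))
        refine this.congr_deriv ?_
        simp only [Pi.sub_apply, id_eq]
        ring
      have h1 : HasDerivAt (fun y => Sf t b y)
          ((t + b - 2*l) / (2*Real.sqrt ((l - t) * (b - l)))) l := by
        have := (Real.hasDerivAt_sqrt hu.ne').comp l h1a
        refine this.congr_deriv ?_
        ring
      have h2a : HasDerivAt (fun y : ℝ => (2*y - (t+b))/(b-t)) (2/(b-t)) l := by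
        have := (((hasDerivAt_id l).const_mul 2).sub_const (t+b)).div_const (b-t)
        refine this.congr_deriv ?_
        norm_num
      have h2lt : (2*l - (t+b))/(b-t) < 1 := (div_lt_one hba).mpr (by linarith)
      have h2gt : -1 < (2*l - (t+b))/(b-t) := (lt_div_iff₀ hba).mpr (by linarith)
      have hsq2 : Real.sqrt (1 - ((2*l - (t+b))/(b-t))^2)
          = 2*Real.sqrt ((l - t) * (b - l))/(b-t) := by
        rw [show 1 - ((2*l - (t+b))/(b-t))^2 = (2*Real.sqrt ((l - t) * (b - l))/(b-t))^2 by
          rw [div_pow, div_pow, mul_pow, hSS2]; field_simp; ring]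
        exact Real.sqrt_sq (by positivity)
      have h2 : HasDerivAt (fun y : ℝ => ((t+b)/2 - t) * Real.arcsin ((2*y - (t+b))/(b-t)))
          (((t+b)/2 - t)/Real.sqrt ((l - t) * (b - l))) l := by
        have := ((Real.hasDerivAt_arcsin (ne_of_gt h2gt) (ne_of_lt h2lt)).comp l h2a).const_mul
          ((t+b)/2 - t)
        simp only [Function.comp] at this
        refine this.congr_deriv ?_
        rw [hsq2]
        field_simp
      have h3 : HasDerivAt (fun y : ℝ => 1 * Real.sqrt ((t-t)*(t-b)) *
          Real.arcsin ((2*t*b + 2*t*y - (t+b)*(y+t))/((b-t)*(y-t)))) 0 l := by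
        have hz : (fun y : ℝ => 1 * Real.sqrt ((t-t)*(t-b)) *
            Real.arcsin ((2*t*b + 2*t*y - (t+b)*(y+t))/((b-t)*(y-t)))) = fun _ => (0:ℝ) := by
          funext y; simp
        rw [hz]
        exact hasDerivAt_const l 0
      have := (h1.add h2).add h3
      refine this.congr_deriv ?_
      rw [show Sf t b l = Real.sqrt ((l - t) * (b - l)) from rfl]
      have hlt : l - t ≠ 0 := by intro h0; nlinarith
      field_simp
      linear_combination (-2) * hSS2
    have := intervalIntegral.integral_eq_sub_of_hasDeriv_right_of_le hab.le
      (F_cont (η := 1) hab (Or.inr rfl)) hderiv (integrable_core hab (Or.inl le_rfl))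
    rw [this, endpointB hab (by linarith : t ≠ b)]
    have hA : (2*t - (t+b))/(b-t) = -1 := by
      rw [div_eq_iff (by linarith : b - t ≠ 0)]; ring
    rw [hA, Real.arcsin_neg_one]
    simp [Sf]
    ring
  · have hderiv : ∀ l ∈ Set.Ioo a b, HasDerivWithinAt
        (fun y => Sf a b y + ((a+b)/2 - t) * Real.arcsin ((2*y - (a+b))/(b-a))
          + 1 * Real.sqrt ((t-a)*(t-b)) *
            Real.arcsin ((2*a*b + 2*t*y - (a+b)*(y+t))/((b-a)*(y-t))))
        (Sf a b l / (l - t)) (Set.Ioi l) l :=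
      fun l hl => (deriv_F hab (Or.inl ⟨hta, rfl⟩) hl).hasDerivWithinAt
    have := intervalIntegral.integral_eq_sub_of_hasDeriv_right_of_le hab.le
      (F_cont (η := 1) hab (Or.inl (Or.inl hta))) hderiv (integrable_core hab (Or.inl ht))
    rw [this, endpointB hab (by linarith : t ≠ b), endpointA hab (by linarith : t ≠ a)]
    ring

lemma K_gt {a b t : ℝ} (hab : a < b) (ht : b < t) :
    ∫ l in a..b, Sf a b l / (l - t)
      = π * ((a+b)/2 - t + Real.sqrt ((t-a)*(t-b))) := by
  have hderiv : ∀ l ∈ Set.Ioo a b, HasDerivWithinAt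
      (fun y => Sf a b y + ((a+b)/2 - t) * Real.arcsin ((2*y - (a+b))/(b-a))
        + (-1) * Real.sqrt ((t-a)*(t-b)) *
          Real.arcsin ((2*a*b + 2*t*y - (a+b)*(y+t))/((b-a)*(y-t))))
      (Sf a b l / (l - t)) (Set.Ioi l) l :=
    fun l hl => (deriv_F hab (Or.inr ⟨ht, rfl⟩) hl).hasDerivWithinAt
  have := intervalIntegral.integral_eq_sub_of_hasDeriv_right_of_le hab.le
    (F_cont (η := -1) hab (Or.inl (Or.inr ht))) hderiv (integrable_core hab (Or.inr ht))
  rw [this, endpointB hab (by linarith : t ≠ b), endpointA hab (by linarith : t ≠ a)]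
  ring

lemma final_alg (s c x wr wr' : ℝ) (hs : 0 < s) (hc : 0 < c)
    (hsum : wr + wr' = x + s - s*c) (hprod : wr * wr' = x*s)
    (hgt : s^2*c < (s - wr)^2) (hlt : (s - wr')^2 < s^2*c) :
    wr ≠ s ∧ wr*(1 - s*c/(s-wr)) = x ∧
    HasDerivAt (fun v : ℝ => v * (1 - s*c/(s-v))) (1 - s^2*c/(s-wr)^2) wr ∧
    (0 < 1 - s^2*c/(s-wr)^2) ∧
    ∀ v : ℝ, v ≠ s → v*(1 - s*c/(s-v)) = x → 0 < 1 - s^2*c/(s-v)^2 → v = wr := by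
  have hswr : s - wr ≠ 0 := by
    intro h
    rw [h] at hgt
    nlinarith
  have hquad : wr^2 - (x + s - s*c)*wr + x*s = 0 := by
    linear_combination wr*hsum - hprod
  refine ⟨fun h => hswr (by rw [h]; ring), ?_, ?_, ?_, ?_⟩
  · field_simp
    linear_combination -hquad
  · have h1 : HasDerivAt (fun v : ℝ => s - v) (-1) wr := by
      exact ((hasDerivAt_const wr s).sub (hasDerivAt_id wr)).congr_deriv (by ring)
    have h2 : HasDerivAt (fun v : ℝ => s*c/(s-v)) (s*c/(s-wr)^2) wr := by
      have := (hasDerivAt_const wr (s*c)).div h1 hswr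
      refine this.congr_deriv ?_
      field_simp
      ring
    have h3 : HasDerivAt (fun v : ℝ => 1 - s*c/(s-v)) (-(s*c/(s-wr)^2)) wr := by
      exact ((hasDerivAt_const wr 1).sub h2).congr_deriv (by ring)
    have := (hasDerivAt_id wr).mul h3
    refine this.congr_deriv ?_
    simp only [id_eq]
    field_simp
    ring
  · have h0 : (0:ℝ) < (s-wr)^2 := by positivity
    have : s^2*c/(s-wr)^2 < 1 := (div_lt_one h0).mpr hgt
    linarith
  · intro v hv hveq hvpos
    have hsv : s - v ≠ 0 := fun h => hv (by linarith [sub_eq_zero.mp h])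
    have hvquad : v^2 - (x + s - s*c)*v + x*s = 0 := by
      field_simp at hveq
      linear_combination -hveq
    have hfact : (v - wr)*(v - wr') = 0 := by
      linear_combination hvquad - v*hsum + hprod
    rcases mul_eq_zero.mp hfact with h | h
    · linarith [sub_eq_zero.mp h]
    · exfalso
      have hvw : v = wr' := by linarith [sub_eq_zero.mp h]
      have h0 : (0:ℝ) < (s-v)^2 := by positivity
      have : (1:ℝ) < s^2*c/(s-v)^2 := (one_lt_div h0).mpr (by rw [hvw]; exact hlt)
      linarith


end MPproofAux

open MPproofAux

set_option maxHeartbeats 1600000 in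
/-- for every real `x ∉ [x⁻, x⁺]` with `x ≠ 0`: `w(x)` is real (say `w(x) = wr`),
`w(x) ≠ σ²`, `φ(wr) = x` where `φ(v) = v(1 − σ²c/(σ² − v))`, the derivative
`φ′(wr) = 1 − σ⁴c/(σ² − wr)²` is strictly positive, and `wr` is the unique real `v ≠ σ²`
satisfying both `φ(v) = x` and `φ′(v) > 0`. -/
theorem mpW_real_point (s c : ℝ) (hs : 0 < s) (hc : 0 < c) (x : ℝ)
    (hx : (x < s * (1 - Real.sqrt c) ^ 2 ∨ s * (1 + Real.sqrt c) ^ 2 < x) ∧ x ≠ 0) :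
    ∃ wr : ℝ, mpW s c (x : ℂ) = (wr : ℂ) ∧
      wr ≠ s ∧
      wr * (1 - s * c / (s - wr)) = x ∧
      HasDerivAt (fun v : ℝ => v * (1 - s * c / (s - v))) (1 - s ^ 2 * c / (s - wr) ^ 2) wr ∧
      0 < 1 - s ^ 2 * c / (s - wr) ^ 2 ∧
      ∀ v : ℝ, v ≠ s → v * (1 - s * c / (s - v)) = x →
        0 < 1 - s ^ 2 * c / (s - v) ^ 2 → v = wr := by
  obtain ⟨hxout, hx0⟩ := hx
  have hrc : 0 < Real.sqrt c := Real.sqrt_pos.mpr hc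
  have hrc2 : Real.sqrt c ^ 2 = c := Real.sq_sqrt hc.le
  set rc := Real.sqrt c with hrcdef
  set a := s * (1 - rc) ^ 2 with hadef
  set b := s * (1 + rc) ^ 2 with hbdef
  have hab : a < b := by nlinarith
  have ha0 : 0 ≤ a := by positivity
  have hπ : (0:ℝ) < π := Real.pi_pos
  set r : ℝ → ℝ := fun l => Real.sqrt ((l - a) * (b - l)) / (2 * π * s * c * l) with hrdef
  have hIcast : (∫ l in a..b,
        (↑(Real.sqrt ((l - a) * (b - l)) / (2 * π * s * c * l)) : ℂ) * (1 / ((l:ℂ) - (x:ℂ))))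
      = (((∫ l in a..b, r l * (1/(l - x))) : ℝ) : ℂ) := by
    rw [← intervalIntegral.integral_ofReal]
    apply intervalIntegral.integral_congr
    intro l _
    simp only [hrdef]
    push_cast
    ring
  have hstep : mpStieltjes s c (x:ℂ)
      = ((((∫ l in a..b, r l * (1/(l - x)))) - max (1 - 1/c) 0 / x : ℝ) : ℂ) := by
    rw [mpStieltjes, ← hrcdef, ← hadef, ← hbdef, hIcast]
    push_cast
    ring
  have hxor : x ≤ a ∨ b < x := by
    rcases hxout with h | h
    · exact Or.inl h.le
    · exact Or.inr h
  have hcongr : Set.EqOn (fun l => r l * (1/(l - x)))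
      (fun l => (1/(2*π*s*c)) * ((1/x) * (Sf a b l / (l - x) - Sf a b l / (l - 0))))
      (Set.uIcc a b) := by
    intro l hl
    rw [Set.uIcc_of_le hab.le] at hl
    simp only [hrdef, Sf, sub_zero]
    rcases eq_or_ne l 0 with rfl | hl0
    · have haz : a = 0 := le_antisymm hl.1 ha0
      rw [haz]
      simp
    · have hlx : l - x ≠ 0 := by
        rcases hxout with h | h
        · have := hl.1; intro h0; nlinarith
        · have := hl.2; intro h0; nlinarith
      field_simp
      ring
  have hIval : (∫ l in a..b, r l * (1/(l - x)))
      = (1/(2*π*s*c)) * ((1/x) * ((∫ l in a..b, Sf a b l / (l - x))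
          - (∫ l in a..b, Sf a b l / (l - 0)))) := by
    rw [intervalIntegral.integral_congr hcongr]
    rw [intervalIntegral.integral_const_mul, intervalIntegral.integral_const_mul,
      intervalIntegral.integral_sub (integrable_core hab hxor)
        (integrable_core hab (Or.inl ha0))]
  have hK0 : (∫ l in a..b, Sf a b l / (l - 0)) = π * ((a+b)/2 - s*|1-c|) := by
    rw [K_le hab ha0]
    rw [show ((0:ℝ)-a)*(0-b) = (s*|1-c|)^2 by
      rw [mul_pow, sq_abs]
      simp only [hadef, hbdef]
      linear_combination (s^2*(rc^2 + c - 2)) * hrc2]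
    rw [Real.sqrt_sq (by positivity)]
    ring
  set q := (x - a) * (x - b) with hqdef
  have hq : 0 < q := by rcases hxout with h | h <;> nlinarith
  set sd := Real.sqrt q with hsddef
  have hsd : 0 < sd := Real.sqrt_pos.mpr hq
  have hsd2 : sd^2 = q := Real.sq_sqrt hq.le
  rcases hxout with hxa | hxb
  · -- x < a, e = -sd
    have hKx : (∫ l in a..b, Sf a b l / (l - x)) = π * ((a+b)/2 - x - sd) := K_le hab hxa.le
    set wr := (x + s - s*c + -sd)/2 with hwrdef
    have hmr : mpW s c (x:ℂ) = ((wr : ℝ) : ℂ) := by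
      rw [mpW, hstep]
      norm_cast
      rw [hIval, hKx, hK0, hwrdef]
      rcases le_or_gt c 1 with hc1 | hc1
      · rw [abs_of_nonneg (by linarith : (0:ℝ) ≤ 1 - c),
          max_eq_right (by rw [sub_nonpos, le_div_iff₀ hc]; linarith)]
        field_simp
        ring
      · rw [abs_of_neg (by linarith : (1:ℝ) - c < 0),
          max_eq_left (by rw [sub_nonneg, div_le_one hc]; linarith)]
        field_simp
        ring
    have hprod : wr * ((x + s - s*c + sd)/2) = x*s := by
      rw [hwrdef]
      linear_combination (-(1/4:ℝ))*hsd2 + (-(1/4:ℝ))*hqdef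
        + ((2*x*s + s^2*(2 - c - rc^2))/4)*hrc2 + ((x - s*(1+rc)^2)/4)*hadef
        + ((x - s*(1-rc)^2)/4)*hbdef
    have hgoal : 2*s*rc < s + s*c - x := by nlinarith [hadef, hrc2, hxa]
    have hgt : s^2*c < (s - wr)^2 := by
      rw [hwrdef]
      nlinarith [hgoal, hsd, hrc2, mul_pos hs hrc]
    have h2 : sd < b - x := by nlinarith [hsd2, hqdef, hsd, hab, hxa]
    have h3 : a - x < sd := by nlinarith [hsd2, hqdef, hsd, hab, hxa]
    have hu1 : s + s*c - x - sd < 2*s*rc := by nlinarith [h3, hrc2, hadef]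
    have hu2 : -(2*s*rc) < s + s*c - x - sd := by nlinarith [h2, hrc2, hbdef]
    have hlt : (s - (x + s - s*c + sd)/2)^2 < s^2*c := by
      nlinarith [hu1, hu2, hrc2, mul_pos hs hrc]
    exact ⟨wr, hmr, final_alg s c x wr ((x + s - s*c + sd)/2) hs hc (by rw [hwrdef]; ring)
      hprod hgt hlt⟩
  · -- b < x, e = sd
    have hKx : (∫ l in a..b, Sf a b l / (l - x)) = π * ((a+b)/2 - x + sd) := K_gt hab hxb
    set wr := (x + s - s*c + sd)/2 with hwrdef
    have hmr : mpW s c (x:ℂ) = ((wr : ℝ) : ℂ) := by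
      rw [mpW, hstep]
      norm_cast
      rw [hIval, hKx, hK0, hwrdef]
      rcases le_or_gt c 1 with hc1 | hc1
      · rw [abs_of_nonneg (by linarith : (0:ℝ) ≤ 1 - c),
          max_eq_right (by rw [sub_nonpos, le_div_iff₀ hc]; linarith)]
        field_simp
        ring
      · rw [abs_of_neg (by linarith : (1:ℝ) - c < 0),
          max_eq_left (by rw [sub_nonneg, div_le_one hc]; linarith)]
        field_simp
        ring
    have hprod : wr * ((x + s - s*c - sd)/2) = x*s := by
      rw [hwrdef]
      linear_combination (-(1/4:ℝ))*hsd2 + (-(1/4:ℝ))*hqdef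
        + ((2*x*s + s^2*(2 - c - rc^2))/4)*hrc2 + ((x - s*(1+rc)^2)/4)*hadef
        + ((x - s*(1-rc)^2)/4)*hbdef
    have hgoal : 2*s*rc < x - s - s*c := by nlinarith [hbdef, hrc2, hxb]
    have hgt : s^2*c < (s - wr)^2 := by
      rw [hwrdef]
      nlinarith [hgoal, hsd, hrc2, mul_pos hs hrc]
    have h2 : sd < x - a := by nlinarith [hsd2, hqdef, hsd, hab, hxb]
    have h3 : x - b < sd := by nlinarith [hsd2, hqdef, hsd, hab, hxb]
    have hu1 : x - s - s*c - sd < 2*s*rc := by nlinarith [h3, hrc2, hbdef]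
    have hu2 : -(2*s*rc) < x - s - s*c - sd := by nlinarith [h2, hrc2, hadef]
    have hlt : (s - (x + s - s*c - sd)/2)^2 < s^2*c := by
      nlinarith [hu1, hu2, hrc2, mul_pos hs hrc]
    exact ⟨wr, hmr, final_alg s c x wr ((x + s - s*c - sd)/2) hs hc (by rw [hwrdef]; ring)
      hprod hgt hlt⟩
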